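/- Let K be a discretely valued nonarchimedean field with uniformizer π, and let M, N be semi-normed modules over a normed K-algebra A with φ: M → N a strict continuous A-module morphism. Then the completion φ̂: M̂ → N̂ is strict, ker φ̂ is the closure (completion) of ker φ, and im φ̂ is the completion of im φ. Consequently, a strict exact sequence of semi-normed A-modules remains exact after completion. -/

import Mathlib

open UniformSpace

/-- Strictness of a map of semi-normed groups: the canonical bijection
`coim φ → im φ` (quotient semi-norm to subspace semi-norm) is a homeomorphism. -/
def IsStrictMap {M N : Type*} [SeminormedAddCommGroup M] [SeminormedAddCommGroup N]
    (φ : M → N) : Prop :=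
  Continuous φ ∧
    ∀ ε > (0 : ℝ), ∃ δ > (0 : ℝ), ∀ x : M, ‖φ x‖ < δ → ∃ y : M, φ y = φ x ∧ ‖y‖ < ε

section Aux

variable {M N : Type*} [SeminormedAddCommGroup M] [SeminormedAddCommGroup N]

private theorem aux_geo_tendsto (C : ℝ) :
    Filter.Tendsto (fun n : ℕ => C * (1/2 : ℝ) ^ n) Filter.atTop (nhds 0) := by
  have h := (tendsto_pow_atTop_nhds_zero_of_lt_one
      (by norm_num : (0:ℝ) ≤ 1/2) (by norm_num : (1/2:ℝ) < 1)).const_mul C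
  simpa using h

/-- The completion of a strict continuous additive map satisfies the same ε-δ property. -/
private theorem aux_strict (φ : M →+ N) (hc : Continuous φ)
    (hs : ∀ ε > (0 : ℝ), ∃ δ > (0:ℝ), ∀ x : M, ‖φ x‖ < δ → ∃ y : M, φ y = φ x ∧ ‖y‖ < ε) :
    ∀ ε > (0 : ℝ), ∃ δ > (0:ℝ), ∀ x : Completion M, ‖Completion.map ⇑φ x‖ < δ →
      ∃ y : Completion M, Completion.map ⇑φ y = Completion.map ⇑φ x ∧ ‖y‖ < ε := by
  have hu : UniformContinuous ⇑φ := uniformContinuous_addMonoidHom_of_continuous hc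
  set F : Completion M → Completion N := Completion.map ⇑φ with hF
  have hFadd : ⇑(AddMonoidHom.completion φ hc) = F := rfl
  have hFc : Continuous F := Completion.continuous_map
  have hFu : UniformContinuous F := Completion.uniformContinuous_map
  have hFcoe : ∀ m : M, F ↑m = ↑(φ m) := fun m => Completion.map_coe hu m
  have hFsub : ∀ a b : Completion M, F (a - b) = F a - F b := by
    intro a b
    rw [← hFadd]; exact map_sub (AddMonoidHom.completion φ hc) a b
  intro ε hε
  have H : ∀ n : ℕ, ∃ δ, δ > 0 ∧ ∀ x : M, ‖φ x‖ < δ →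
      ∃ y : M, φ y = φ x ∧ ‖y‖ < ε / 4 * (1/2) ^ n := fun n => by
    obtain ⟨δ, hδ0, hδ⟩ := hs (ε / 4 * (1/2) ^ n) (by positivity); exact ⟨δ, hδ0, hδ⟩
  choose d hd0 hd using H
  have hηpos : ∀ n : ℕ, 0 < min (d n / 2) (ε / 4 * (1/2) ^ n) := fun n =>
    lt_min (by linarith [hd0 n]) (by positivity)
  refine ⟨min (d 0 / 2) (ε / 4 * (1/2) ^ 0), hηpos 0, ?_⟩
  intro x hx
  -- the key approximation step
  have key : ∀ (n : ℕ) (m : M), ‖F (x - ↑m)‖ < min (d n / 2) (ε / 4 * (1/2) ^ n) →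
      ∃ m' : M, ‖F (x - ↑m')‖ < min (d (n+1) / 2) (ε / 4 * (1/2) ^ (n+1)) ∧
        ‖m' - m‖ < ε / 4 * (1/2) ^ n := by
    intro n m hm
    set η : ℕ → ℝ := fun k => min (d k / 2) (ε / 4 * (1/2) ^ k) with hηdef
    set θ : ℝ := min (η n) (η (n+1)) with hθ
    have hθpos : 0 < θ := lt_min (hηpos n) (hηpos (n+1))
    obtain ⟨ρ, hρ0, hρ⟩ := Metric.uniformContinuous_iff.1 hFu θ hθpos
    obtain ⟨u, hu'⟩ := Metric.denseRange_iff.1 (Completion.denseRange_coe (α := M))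
      (x - ↑m) ρ hρ0
    rw [dist_comm] at hu'
    have hdist : dist (F ↑u) (F (x - ↑m)) < θ := hρ hu'
    have hnu : ‖φ u‖ < d n := by
      have h1 : ‖((φ u : N) : Completion N)‖ ≤ dist (F ↑u) (F (x - ↑m)) + ‖F (x - ↑m)‖ := by
        rw [← hFcoe u]
        calc ‖F ↑u‖ = dist (F ↑u) 0 := by rw [dist_zero_right]
        _ ≤ dist (F ↑u) (F (x - ↑m)) + dist (F (x - ↑m)) 0 := dist_triangle _ _ _
        _ = dist (F ↑u) (F (x - ↑m)) + ‖F (x - ↑m)‖ := by rw [dist_zero_right]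
      rw [Completion.norm_coe] at h1
      have h2 : θ ≤ d n / 2 := le_trans (min_le_left _ _) (min_le_left _ _)
      have h3 : η n ≤ d n / 2 := min_le_left _ _
      linarith
    obtain ⟨y, hy1, hy2⟩ := hd n u hnu
    refine ⟨m + y, ?_, by simpa using hy2⟩
    have hxy : x - ↑(m + y) = (x - ↑m) - ↑y := by
      rw [Completion.coe_add, sub_add_eq_sub_sub]
    have hFval : F (x - ↑(m + y)) = F (x - ↑m) - ↑(φ u) := by
      rw [hxy, hFsub, hFcoe, hy1]
    have : ‖F (x - ↑(m + y))‖ < η (n + 1) := by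
      rw [hFval]
      calc ‖F (x - ↑m) - ↑(φ u)‖ = dist (F ↑u) (F (x - ↑m)) := by
            rw [dist_comm, dist_eq_norm, hFcoe]
      _ < θ := hdist
      _ ≤ η (n+1) := min_le_right _ _
    exact this
  -- build the approximating sequence
  have hseq : ∃ s : ℕ → M, s 0 = 0 ∧
      (∀ n, ‖F (x - ↑(s n))‖ < min (d n / 2) (ε / 4 * (1/2) ^ n)) ∧
      (∀ n, ‖s (n+1) - s n‖ < ε / 4 * (1/2) ^ n) := by
    have base : ‖F (x - ↑(0 : M))‖ < min (d 0 / 2) (ε / 4 * (1/2) ^ 0) := by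
      rw [Completion.coe_zero, sub_zero]; exact hx
    let f : ∀ n : ℕ, {m : M // ‖F (x - ↑m)‖ < min (d n / 2) (ε / 4 * (1/2) ^ n)} := fun n =>
      Nat.rec ⟨0, base⟩
        (fun n p => ⟨(key n p.1 p.2).choose, (key n p.1 p.2).choose_spec.1⟩) n
    exact ⟨fun n => (f n).1, rfl, fun n => (f n).2,
      fun n => (key n (f n).1 (f n).2).choose_spec.2⟩
  obtain ⟨s, hs0, hsinv, hstep⟩ := hseq
  have hcauchy : CauchySeq (fun n => ((s n : M) : Completion M)) := by
    refine cauchySeq_of_le_geometric (1/2) (ε/4) (by norm_num) (fun n => ?_)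
    have h1 : dist ((s n : M) : Completion M) ((s (n+1) : M) : Completion M)
        = ‖s (n+1) - s n‖ := by
      rw [Completion.dist_eq, dist_comm, dist_eq_norm]
    rw [h1]
    exact le_of_lt (hstep n)
  obtain ⟨y, hy⟩ := cauchySeq_tendsto_of_complete hcauchy
  -- norm bound on partial approximants
  have hb : ∀ n, ‖s n‖ ≤ ε/2 - ε/2 * (1/2)^n := by
    intro n
    induction n with
    | zero => rw [hs0]; simp
    | succ n ih =>
      have h1 : s n + (s (n+1) - s n) = s (n+1) := by abel
      have h2 : ‖s (n+1)‖ ≤ ‖s n‖ + ‖s (n+1) - s n‖ := by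
        rw [← h1]; exact (norm_add_le _ _).trans (by rw [h1])
      have h3 : ε/2 * (1/2:ℝ)^(n+1) = ε/4 * (1/2)^n := by rw [pow_succ]; ring
      have h4 := hstep n
      linarith
  have hynorm : ‖y‖ < ε := by
    have hn : Filter.Tendsto (fun n => ‖((s n : M) : Completion M)‖)
        Filter.atTop (nhds ‖y‖) := hy.norm
    have hle : ‖y‖ ≤ ε/2 := by
      refine le_of_tendsto hn (Filter.Eventually.of_forall fun n => ?_)
      rw [Completion.norm_coe]
      have h5 := hb n
      have h6 : 0 < ε/2 * (1/2:ℝ)^n := by positivity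
      linarith
    linarith
  refine ⟨y, ?_, hynorm⟩
  have h1 : Filter.Tendsto (fun n => F ((s n : M) : Completion M))
      Filter.atTop (nhds (F y)) := (hFc.tendsto y).comp hy
  have h2 : Filter.Tendsto (fun n => F ((s n : M) : Completion M))
      Filter.atTop (nhds (F x)) := by
    rw [tendsto_iff_dist_tendsto_zero]
    refine squeeze_zero (fun n => dist_nonneg) (fun n => ?_) (aux_geo_tendsto (ε/4))
    have e : dist (F ((s n : M) : Completion M)) (F x) = ‖F (x - ↑(s n))‖ := by
      rw [hFsub, dist_eq_norm, ← norm_neg]; congr 1; abel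
    rw [e]
    exact le_of_lt (lt_of_lt_of_le (hsinv n) (min_le_right _ _))
  exact tendsto_nhds_unique h1 h2

/-- Kernel of the completion is the closure of the image of the kernel. -/
private theorem aux_ker (φ : M →+ N) (hc : Continuous φ)
    (hs : ∀ ε > (0 : ℝ), ∃ δ > (0:ℝ), ∀ x : M, ‖φ x‖ < δ → ∃ y : M, φ y = φ x ∧ ‖y‖ < ε) :
    {x : Completion M | Completion.map ⇑φ x = 0} =
      closure ((fun m : M => (m : Completion M)) '' {m : M | φ m = 0}) := by
  have hu : UniformContinuous ⇑φ := uniformContinuous_addMonoidHom_of_continuous hc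
  set F : Completion M → Completion N := Completion.map ⇑φ with hF
  have hFc : Continuous F := Completion.continuous_map
  have hFu : UniformContinuous F := Completion.uniformContinuous_map
  have hFcoe : ∀ m : M, F ↑m = ↑(φ m) := fun m => Completion.map_coe hu m
  apply le_antisymm
  · intro x hx
    rw [Metric.mem_closure_iff]
    intro ε hε
    obtain ⟨δ, hδ0, hδ⟩ := hs (ε/2) (by linarith)
    obtain ⟨ρ, hρ0, hρ⟩ := Metric.uniformContinuous_iff.1 hFu δ hδ0
    obtain ⟨u, hu'⟩ := Metric.denseRange_iff.1 (Completion.denseRange_coe (α := M)) x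
      (min ρ (ε/2)) (lt_min hρ0 (by linarith))
    rw [dist_comm] at hu'
    have hd1 : dist (↑u : Completion M) x < ρ := lt_of_lt_of_le hu' (min_le_left _ _)
    have hd2 : dist (↑u : Completion M) x < ε/2 := lt_of_lt_of_le hu' (min_le_right _ _)
    have hφu : ‖φ u‖ < δ := by
      have h := hρ hd1
      rw [hFcoe, hx, dist_zero_right, Completion.norm_coe] at h
      exact h
    obtain ⟨y, hy1, hy2⟩ := hδ u hφu
    refine ⟨↑(u - y), ⟨u - y, ?_, rfl⟩, ?_⟩
    · show φ (u - y) = 0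
      rw [map_sub, hy1, sub_self]
    · calc dist x ↑(u - y) ≤ dist x ↑u + dist (↑u : Completion M) ↑(u - y) :=
          dist_triangle _ _ _
      _ = dist (↑u : Completion M) x + dist u (u - y) := by
          rw [dist_comm x, Completion.dist_eq]
      _ < ε/2 + ε/2 := by
          refine add_lt_add hd2 ?_
          rw [dist_eq_norm]
          simpa using hy2
      _ = ε := by ring
  · refine closure_minimal ?_ (isClosed_eq hFc continuous_const)
    rintro _ ⟨m, hm, rfl⟩
    show F ↑m = 0
    rw [hFcoe, hm, Completion.coe_zero]

/-- Range of the completion is the closure of the image of the range. -/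
private theorem aux_range (φ : M →+ N) (hc : Continuous φ)
    (hs : ∀ ε > (0 : ℝ), ∃ δ > (0:ℝ), ∀ x : M, ‖φ x‖ < δ → ∃ y : M, φ y = φ x ∧ ‖y‖ < ε) :
    Set.range (Completion.map ⇑φ) =
      closure ((fun n : N => (n : Completion N)) '' Set.range ⇑φ) := by
  have hu : UniformContinuous ⇑φ := uniformContinuous_addMonoidHom_of_continuous hc
  set F : Completion M → Completion N := Completion.map ⇑φ with hF
  have hFadd : ⇑(AddMonoidHom.completion φ hc) = F := rfl
  have hFc : Continuous F := Completion.continuous_map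
  have hFu : UniformContinuous F := Completion.uniformContinuous_map
  have hFcoe : ∀ m : M, F ↑m = ↑(φ m) := fun m => Completion.map_coe hu m
  have hFsub : ∀ a b : Completion M, F (a - b) = F a - F b := by
    intro a b; rw [← hFadd]; exact map_sub (AddMonoidHom.completion φ hc) a b
  have hFadd' : ∀ a b : Completion M, F (a + b) = F a + F b := by
    intro a b; rw [← hFadd]; exact map_add (AddMonoidHom.completion φ hc) a b
  have hsub : ((fun n : N => (n : Completion N)) '' Set.range ⇑φ) ⊆ Set.range F := by
    rintro _ ⟨_, ⟨m, rfl⟩, rfl⟩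
    exact ⟨↑m, by simpa using hFcoe m⟩
  -- the range of F is closed
  have hclosed : closure (Set.range F) ⊆ Set.range F := by
    intro b hb
    have hstr := aux_strict φ hc hs
    have H : ∀ k : ℕ, ∃ δ, δ > 0 ∧ ∀ x : Completion M, ‖F x‖ < δ →
        ∃ y : Completion M, F y = F x ∧ ‖y‖ < (1/2:ℝ)^k := fun k => by
      obtain ⟨δ, hδ0, hδ⟩ := hstr ((1/2:ℝ)^k) (by positivity); exact ⟨δ, hδ0, hδ⟩
    choose d hd0 hd using H
    have hμpos : ∀ k : ℕ, 0 < min (min (d k) (d (k+1))) ((1/2:ℝ)^k) / 2 := fun k => by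
      have h := lt_min (lt_min (hd0 k) (hd0 (k+1))) (by positivity : (0:ℝ) < (1/2:ℝ)^k)
      linarith
    have ha : ∀ k : ℕ, ∃ a : Completion M,
        dist b (F a) < min (min (d k) (d (k+1))) ((1/2:ℝ)^k) / 2 := by
      intro k
      obtain ⟨c, hc1, hc2⟩ := Metric.mem_closure_iff.1 hb _ (hμpos k)
      obtain ⟨a, rfl⟩ := hc1
      exact ⟨a, hc2⟩
    choose a haa using ha
    have hgap : ∀ k, ∃ y : Completion M,
        F y = F (a (k+1)) - F (a k) ∧ ‖y‖ < (1/2:ℝ)^(k+1) := by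
      intro k
      have h1 : ‖F (a (k+1) - a k)‖ < d (k+1) := by
        rw [hFsub]
        have e1 := haa (k+1)
        have e2 := haa k
        have e3 : min (min (d (k+1)) (d (k+2))) ((1/2:ℝ)^(k+1)) ≤ d (k+1) :=
          le_trans (min_le_left _ _) (min_le_left _ _)
        have e4 : min (min (d k) (d (k+1))) ((1/2:ℝ)^k) ≤ d (k+1) :=
          le_trans (min_le_left _ _) (min_le_right _ _)
        calc ‖F (a (k+1)) - F (a k)‖ = dist (F (a (k+1))) (F (a k)) := (dist_eq_norm _ _).symm
        _ ≤ dist (F (a (k+1))) b + dist b (F (a k)) := dist_triangle _ _ _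
        _ = dist b (F (a (k+1))) + dist b (F (a k)) := by rw [dist_comm]
        _ < _ := add_lt_add e1 e2
        _ ≤ d (k+1) := by linarith
      obtain ⟨y, hy1, hy2⟩ := hd (k+1) _ h1
      rw [hFsub] at hy1
      exact ⟨y, hy1, hy2⟩
    choose yy hyy1 hyy2 using hgap
    have hzex : ∃ z : ℕ → Completion M, (∀ k, F (z k) = F (a k)) ∧
        (∀ k, dist (z k) (z (k+1)) ≤ 1 * (1/2:ℝ)^k) := by
      refine ⟨fun k => a 0 + (Finset.range k).sum yy, ?_, ?_⟩
      · intro k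
        induction k with
        | zero => simp
        | succ k ih =>
          dsimp only at ih ⊢
          rw [Finset.sum_range_succ, ← add_assoc, hFadd', ih, hyy1]
          abel
      · intro k
        dsimp only
        have e : (a 0 + (Finset.range (k+1)).sum yy)
            = (a 0 + (Finset.range k).sum yy) + yy k := by
          rw [Finset.sum_range_succ, add_assoc]
        rw [e, dist_eq_norm]
        have e2 : a 0 + (Finset.range k).sum yy - (a 0 + (Finset.range k).sum yy + yy k)
            = -yy k := by abel
        rw [e2, norm_neg, one_mul]
        have h3 : (1/2:ℝ)^(k+1) ≤ (1/2:ℝ)^k :=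
          pow_le_pow_of_le_one (by norm_num) (by norm_num) (Nat.le_succ k)
        linarith [hyy2 k]
    obtain ⟨z, hFz, hzd⟩ := hzex
    have hzc : CauchySeq z :=
      cauchySeq_of_le_geometric (1/2) 1 (by norm_num) hzd
    obtain ⟨w, hw⟩ := cauchySeq_tendsto_of_complete hzc
    refine ⟨w, ?_⟩
    have h1 : Filter.Tendsto (fun k => F (z k)) Filter.atTop (nhds (F w)) :=
      (hFc.tendsto w).comp hw
    have h2 : Filter.Tendsto (fun k => F (z k)) Filter.atTop (nhds b) := by
      rw [tendsto_iff_dist_tendsto_zero]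
      refine squeeze_zero (fun k => dist_nonneg) (fun k => ?_) (aux_geo_tendsto (1/2))
      rw [hFz, dist_comm]
      have e1 : min (min (d k) (d (k+1))) ((1/2:ℝ)^k) ≤ (1/2:ℝ)^k := min_le_right _ _
      have e2 : (1/2:ℝ) * (1/2)^k = (1/2:ℝ)^k / 2 := by ring
      have e3 := haa k
      rw [e2]
      linarith
    exact tendsto_nhds_unique h1 h2
  apply le_antisymm
  · rintro _ ⟨x, rfl⟩
    rw [Metric.mem_closure_iff]
    intro ε hε
    obtain ⟨ρ, hρ0, hρ⟩ := Metric.uniformContinuous_iff.1 hFu ε hε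
    obtain ⟨u, hu'⟩ := Metric.denseRange_iff.1 (Completion.denseRange_coe (α := M)) x ρ hρ0
    rw [dist_comm] at hu'
    refine ⟨↑(φ u), ⟨φ u, Set.mem_range_self u, rfl⟩, ?_⟩
    have h := hρ hu'
    rw [hFcoe] at h
    rw [dist_comm]
    exact h
  · exact le_trans (closure_mono hsub) hclosed

end Aux

/-- Let `K` be a discretely valued nonarchimedean field and `A` a
normed `K`-algebra.  If `φ : M → N` is a strict morphism of semi-normed `A`-modules,
then its completion `φ̂ : M̂ → N̂` is strict, `ker φ̂` is the completion (closure of the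
image) of `ker φ`, and `im φ̂` is the completion of `im φ`.  Consequently any strict
exact pair of semi-normed `A`-modules stays exact after completion. -/
theorem stmt_15 {K : Type*} [NontriviallyNormedField K]
    (π : K) (hπ0 : π ≠ 0) (hπ1 : ‖π‖ < 1)
    (hdisc : ∀ c : K, c ≠ 0 → ∃ k : ℤ, ‖c‖ = ‖π‖ ^ k)
    {A : Type*} [NormedRing A] [NormedAlgebra K A]
    {M N : Type*} [SeminormedAddCommGroup M] [SeminormedAddCommGroup N]
    [Module A M] [Module A N] [IsBoundedSMul A M] [IsBoundedSMul A N]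
    (φ : M →ₗ[A] N) (hφ : IsStrictMap (φ : M → N)) :
    IsStrictMap (Completion.map (φ : M → N)) ∧
    {x : Completion M | Completion.map (φ : M → N) x = 0} =
      closure ((fun m : M => (m : Completion M)) '' (LinearMap.ker φ : Set M)) ∧
    Set.range (Completion.map (φ : M → N)) =
      closure ((fun n : N => (n : Completion N)) '' Set.range (φ : M → N)) ∧
    (∀ (P : Type*) [SeminormedAddCommGroup P],
      ∀ [Module A P] [IsBoundedSMul A P] (ψ : N →ₗ[A] P),
        IsStrictMap (ψ : N → P) → Function.Exact (φ : M → N) (ψ : N → P) →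
          Function.Exact (Completion.map (φ : M → N)) (Completion.map (ψ : N → P))) := by
  obtain ⟨hc, hs⟩ := hφ
  have hker : (LinearMap.ker φ : Set M) = {m : M | φ m = 0} := by
    ext m; simp [LinearMap.mem_ker]
  have h2 := aux_range φ.toAddMonoidHom hc hs
  rw [LinearMap.toAddMonoidHom_coe] at h2
  refine ⟨⟨Completion.continuous_map, aux_strict φ.toAddMonoidHom hc hs⟩, ?_, h2, ?_⟩
  · rw [hker]
    have h1 := aux_ker φ.toAddMonoidHom hc hs
    rw [LinearMap.toAddMonoidHom_coe] at h1
    exact h1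
  · intro P _ _ _ ψ hψ hex
    obtain ⟨hc', hs'⟩ := hψ
    have h1 := aux_ker ψ.toAddMonoidHom hc' hs'
    rw [LinearMap.toAddMonoidHom_coe] at h1
    have hsets : {n : N | ψ n = 0} = Set.range (φ : M → N) := by
      ext n; exact hex n
    intro y
    constructor
    · intro hy
      have h : y ∈ {x : Completion N | Completion.map (ψ : N → P) x = 0} := hy
      rw [h1, hsets, ← h2] at h
      exact h
    · intro hy
      have h : y ∈ Set.range (Completion.map (φ : M → N)) := hy
      rw [h2, ← hsets, ← h1] at h
      exact h
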